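/- Consider the one-cluster extended model (u,e) on a finite connected graph 𝒢=(V,E) with nonempty boundary ∂⊆V and weight w, with boundary condition 1. For z∈V define the map σ̄_z(u,e) = (σ_z(u,e), e), where σ_z(u,e) = u if the open cluster C_z of z contains a boundary vertex, and otherwise σ_z(u,e)_y = R(u_y) = −conj(u_y) for every y∈C_z and σ_z(u,e)_y = u_y for y∉C_z. Then σ̄_z preserves the joint law P of (u,e). -/

import Mathlib

open MeasureTheory Real

noncomputable section

instance : Fact (0 < 2 * π) := ⟨by positivity⟩

noncomputable instance : MeasureSpace Real.Angle :=
  (inferInstance : MeasureSpace (AddCircle (2 * π)))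

/-- The spin space: the unit circle, represented by angles in `ℝ/2πℤ`. -/
abbrev Spin : Type := Real.Angle

/-- A weight function for an O(2) model, expressed through angles:
`w(e^{iθ₁}, e^{iθ₂}) = W(θ₁ - θ₂)`.  Rotation invariance is automatic; symmetry
and reflection invariance of `w` correspond to `W` being even, and the
monotonicity assumption on `θ ↦ w(1, e^{iθ})` corresponds to `W` being strictly
decreasing on `[0, π]`. -/
structure IsWeight (W : Spin → ℝ) : Prop where
  pos : ∀ s, 0 < W s
  even : ∀ s, W (-s) = W s
  cont : Continuous W
  anti : StrictAntiOn (fun x : ℝ => W (x : Spin)) (Set.Icc 0 π)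

variable {V : Type} [Fintype V] [LinearOrder V]

/-- Base measure on spin configurations: boundary spins are fixed to `1`
(angle `0`), the other spins get the Haar measure of the circle. -/
def spinBase (B : Finset V) : Measure (V → Spin) :=
  Measure.pi fun v => if v ∈ B then Measure.dirac (0 : Spin) else volume

/-- Density of the spin measure. -/
def spinDensity (G : SimpleGraph V) [DecidableRel G.Adj] (W : Spin → ℝ) (θ : V → Spin) : ENNReal :=
  ∏ e ∈ G.edgeFinset, ENNReal.ofReal (W (θ e.inf - θ e.sup))

/-- One-cluster bond opening probability
`p(u₁,u₂) = (1 - w(R u₁, u₂)/w(u₁,u₂)) 1_{Re u₁ · Re u₂ > 0}`, where `R z = -conj z`. -/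
def pBond (W : Spin → ℝ) (u₁ u₂ : Spin) : ℝ :=
  if 0 < u₁.cos * u₂.cos then 1 - W (((π : ℝ) : Spin) - (u₁ + u₂)) / W (u₁ - u₂) else 0

/-- Two-cluster model: opening probability for bonds of the first family,
associated with the reflection `R₁ z = ξ² conj z`, `ξ = e^{iπ/4}`. -/
def pBond2 (W : Spin → ℝ) (u₁ u₂ : Spin) : ℝ :=
  if 0 < (u₁ + ((π / 4 : ℝ) : Spin)).cos * (u₂ + ((π / 4 : ℝ) : Spin)).cos then
    1 - W (((π / 2 : ℝ) : Spin) - (u₁ + u₂)) / W (u₁ - u₂) else 0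

/-- Two-cluster model: opening probability for bonds of the second family,
associated with the reflection `R₂ z = conj(ξ)² conj z`. -/
def qBond2 (W : Spin → ℝ) (u₁ u₂ : Spin) : ℝ :=
  if 0 < (u₁ - ((π / 4 : ℝ) : Spin)).cos * (u₂ - ((π / 4 : ℝ) : Spin)).cos then
    1 - W (((-(π / 2) : ℝ) : Spin) - (u₁ + u₂)) / W (u₁ - u₂) else 0

/-- Two-cluster model: probability that both bonds are open. -/
def cBond2 (W : Spin → ℝ) (u₁ u₂ : Spin) : ℝ :=
  if 0 < (u₁ - ((π / 4 : ℝ) : Spin)).cos * (u₂ - ((π / 4 : ℝ) : Spin)).cos ∧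
      0 < (u₁ + ((π / 4 : ℝ) : Spin)).cos * (u₂ + ((π / 4 : ℝ) : Spin)).cos then
    1 - (W (((π / 2 : ℝ) : Spin) - (u₁ + u₂)) + W (((-(π / 2) : ℝ) : Spin) - (u₁ + u₂))
        - W (((π : ℝ) : Spin) + (u₁ - u₂))) / W (u₁ - u₂)
  else 0

/-- Conditional weight of a one-cluster bond configuration given the spins. -/
def bondWeight1 (G : SimpleGraph V) [DecidableRel G.Adj] (W : Spin → ℝ) (θ : V → Spin)
    (b : Sym2 V → Bool) : ENNReal :=
  ∏ e ∈ G.edgeFinset,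
    ENNReal.ofReal (if b e then pBond W (θ e.inf) (θ e.sup) else 1 - pBond W (θ e.inf) (θ e.sup))

/-- Joint weight for a pair of bonds with marginals `Ber(p)`, `Ber(q)` and
`P(both open) = c`. -/
def pairWeight (p q c : ℝ) : Bool → Bool → ℝ
  | true, true => c
  | true, false => p - c
  | false, true => q - c
  | false, false => 1 - p - q + c

/-- Conditional weight of a two-cluster bond configuration given the spins. -/
def bondWeight2 (G : SimpleGraph V) [DecidableRel G.Adj] (W : Spin → ℝ) (θ : V → Spin)
    (b : (Sym2 V → Bool) × (Sym2 V → Bool)) : ENNReal :=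
  ∏ e ∈ G.edgeFinset,
    ENNReal.ofReal (pairWeight (pBond2 W (θ e.inf) (θ e.sup)) (qBond2 W (θ e.inf) (θ e.sup))
      (cBond2 W (θ e.inf) (θ e.sup)) (b.1 e) (b.2 e))

/-- Unnormalized one-cluster extended measure. -/
def extAux1 (G : SimpleGraph V) [DecidableRel G.Adj] (W : Spin → ℝ) (B : Finset V) :
    Measure ((V → Spin) × (Sym2 V → Bool)) :=
  ((spinBase B).prod Measure.count).withDensity fun ω =>
    spinDensity G W ω.1 * bondWeight1 G W ω.1 ω.2

/-- The one-cluster extended model `(u, e)`: spins with density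
`∏_{(xy)∈E} w(u_x,u_y)` and boundary condition `1`, together with bonds that
are open independently with probability `p(u_x,u_y)` given the spins. -/
def extP1 (G : SimpleGraph V) [DecidableRel G.Adj] (W : Spin → ℝ) (B : Finset V) :
    Measure ((V → Spin) × (Sym2 V → Bool)) :=
  (extAux1 G W B Set.univ)⁻¹ • extAux1 G W B

/-- Unnormalized two-cluster extended measure. -/
def extAux2 (G : SimpleGraph V) [DecidableRel G.Adj] (W : Spin → ℝ) (B : Finset V) :
    Measure ((V → Spin) × ((Sym2 V → Bool) × (Sym2 V → Bool))) :=
  ((spinBase B).prod Measure.count).withDensity fun ω =>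
    spinDensity G W ω.1 * bondWeight2 G W ω.1 ω.2

/-- The two-cluster extended model `(u, e¹, e²)`. -/
def extP2 (G : SimpleGraph V) [DecidableRel G.Adj] (W : Spin → ℝ) (B : Finset V) :
    Measure ((V → Spin) × ((Sym2 V → Bool) × (Sym2 V → Bool))) :=
  (extAux2 G W B Set.univ)⁻¹ • extAux2 G W B

/-- The graph of open bonds. -/
def openGraph (G : SimpleGraph V) (b : Sym2 V → Bool) : SimpleGraph V where
  Adj u v := G.Adj u v ∧ b s(u, v) = true
  symm := ⟨fun u v h => ⟨h.1.symm, by rw [Sym2.eq_swap]; exact h.2⟩⟩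
  loopless := ⟨fun u h => G.loopless.irrefl u h.1⟩

/-- `x` is joined to the boundary `B` by a path of open bonds. -/
def connToBdry (G : SimpleGraph V) (B : Finset V) (x : V) (b : Sym2 V → Bool) : Prop :=
  ∃ v ∈ B, (openGraph G b).Reachable x v

end

noncomputable section

open scoped Classical in
/-- The swapping map `σ̄_z`: if the open cluster of `z` touches the boundary,
do nothing; otherwise reflect every spin of the open cluster of `z` by
`R(z) = -conj(z)` (on angles, `θ ↦ π - θ`).  Bonds are unchanged. -/
def flipMap {V : Type} [Fintype V] [LinearOrder V] (G : SimpleGraph V) (B : Finset V) (z : V)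
    (ω : (V → Spin) × (Sym2 V → Bool)) : (V → Spin) × (Sym2 V → Bool) :=
  if ∃ v ∈ B, (openGraph G ω.2).Reachable z v then ω
  else
    (fun y => if (openGraph G ω.2).Reachable z y then ((π : ℝ) : Spin) - ω.1 y else ω.1 y, ω.2)

/-! ### Auxiliary material for the proof -/

section FlipAux

open scoped Classical

instance : BorelSpace Spin := inferInstanceAs (BorelSpace (AddCircle (2 * π)))

instance : SecondCountableTopology Spin :=
  inferInstanceAs (SecondCountableTopology (AddCircle (2 * π)))

instance : IsFiniteMeasure (volume : Measure Spin) :=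
  inferInstanceAs (IsFiniteMeasure (volume : Measure (AddCircle (2 * π))))

instance : (volume : Measure Spin).IsAddLeftInvariant :=
  inferInstanceAs ((volume : Measure (AddCircle (2 * π))).IsAddLeftInvariant)

instance : (volume : Measure Spin).IsNegInvariant :=
  inferInstanceAs ((volume : Measure (AddCircle (2 * π))).IsNegInvariant)

lemma spin_singleton_null (x : Spin) : (volume : Measure Spin) {x} = 0 := by
  have h := AddCircle.volume_closedBall (T := 2 * π) (x := x) 0
  erw [Metric.closedBall_zero] at h
  refine h.trans ?_
  rw [mul_zero, min_eq_right (by positivity), ENNReal.ofReal_zero]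

lemma cosZero_measurable : MeasurableSet {s : Spin | Real.Angle.cos s = 0} :=
  Real.Angle.continuous_cos.measurable (measurableSet_singleton (0 : ℝ))

lemma cosZero_null : (volume : Measure Spin) {s : Spin | Real.Angle.cos s = 0} = 0 := by
  refine measure_mono_null (fun s hs => ?_)
    (measure_union_null (spin_singleton_null (((π / 2 : ℝ)) : Spin))
      (spin_singleton_null (((-π / 2 : ℝ)) : Spin)))
  rcases Real.Angle.cos_eq_zero_iff.mp hs with h | h <;> simp [h]

lemma spin_cos_pi_sub (θ : Spin) :
    Real.Angle.cos (((π : ℝ) : Spin) - θ) = - Real.Angle.cos θ := by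
  refine Real.Angle.induction_on θ fun x => ?_
  rw [← Real.Angle.coe_sub, Real.Angle.cos_coe, Real.Angle.cos_coe, Real.cos_pi_sub]

lemma IsWeight.even' {W : Spin → ℝ} (hW : IsWeight W) (a b : Spin) (h : a = -b) :
    W a = W b := by rw [h, hW.even]

lemma closed_weight (W : Spin → ℝ) (hW : IsWeight W) (θ1 θ2 : Spin) :
    W (θ1 - θ2) * (1 - pBond W θ1 θ2)
      = if 0 < θ1.cos * θ2.cos then W (((π : ℝ) : Spin) - (θ1 + θ2)) else W (θ1 - θ2) := by
  unfold pBond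
  split_ifs with h
  · rw [sub_sub_cancel, mul_div_cancel₀ _ (hW.pos _).ne']
  · ring

lemma W_flip_flip (W : Spin → ℝ) (hW : IsWeight W) (θ1 θ2 : Spin) :
    W ((((π : ℝ) : Spin) - θ1) - (((π : ℝ) : Spin) - θ2)) = W (θ1 - θ2) :=
  hW.even' _ _ (by abel)

lemma pBond_flip_flip (W : Spin → ℝ) (hW : IsWeight W) (θ1 θ2 : Spin) :
    pBond W (((π : ℝ) : Spin) - θ1) (((π : ℝ) : Spin) - θ2) = pBond W θ1 θ2 := by
  unfold pBond
  rw [spin_cos_pi_sub, spin_cos_pi_sub, neg_mul_neg,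
    W_flip_flip W hW,
    hW.even' (((π : ℝ) : Spin) - ((((π : ℝ) : Spin) - θ1) + (((π : ℝ) : Spin) - θ2)))
      (((π : ℝ) : Spin) - (θ1 + θ2)) (by abel)]

lemma flip_closed_left (W : Spin → ℝ) (hW : IsWeight W) (θ1 θ2 : Spin)
    (h : θ1.cos * θ2.cos ≠ 0) :
    W ((((π : ℝ) : Spin) - θ1) - θ2) * (1 - pBond W (((π : ℝ) : Spin) - θ1) θ2)
      = W (θ1 - θ2) * (1 - pBond W θ1 θ2) := by
  rw [closed_weight W hW, closed_weight W hW, spin_cos_pi_sub]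
  rcases h.lt_or_gt with hneg | hpos
  · rw [if_pos (by rw [neg_mul]; exact neg_pos.2 hneg), if_neg (not_lt.2 hneg.le)]
    exact congrArg W (by abel)
  · rw [if_neg (by rw [neg_mul]; exact not_lt.2 (neg_nonpos.2 hpos.le)), if_pos hpos]
    exact congrArg W (by abel)

lemma flip_closed_right (W : Spin → ℝ) (hW : IsWeight W) (θ1 θ2 : Spin)
    (h : θ1.cos * θ2.cos ≠ 0) :
    W (θ1 - (((π : ℝ) : Spin) - θ2)) * (1 - pBond W θ1 (((π : ℝ) : Spin) - θ2))
      = W (θ1 - θ2) * (1 - pBond W θ1 θ2) := by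
  rw [closed_weight W hW, closed_weight W hW, spin_cos_pi_sub]
  rcases h.lt_or_gt with hneg | hpos
  · rw [if_pos (by rw [mul_neg]; exact neg_pos.2 hneg), if_neg (not_lt.2 hneg.le)]
    exact hW.even' _ _ (by abel)
  · rw [if_neg (by rw [mul_neg]; exact not_lt.2 (neg_nonpos.2 hpos.le)), if_pos hpos]
    exact hW.even' _ _ (by abel)

lemma flip_edge (W : Spin → ℝ) (hW : IsWeight W) (θ1 θ2 : Spin)
    (h1 : θ1.cos ≠ 0) (h2 : θ2.cos ≠ 0) (r1 r2 : Prop) [Decidable r1] [Decidable r2] (be : Bool)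
    (hbe : be = true → (r1 ↔ r2)) :
    W ((if r1 then ((π : ℝ) : Spin) - θ1 else θ1) - (if r2 then ((π : ℝ) : Spin) - θ2 else θ2)) *
      (if be then
          pBond W (if r1 then ((π : ℝ) : Spin) - θ1 else θ1)
            (if r2 then ((π : ℝ) : Spin) - θ2 else θ2)
        else 1 - pBond W (if r1 then ((π : ℝ) : Spin) - θ1 else θ1)
            (if r2 then ((π : ℝ) : Spin) - θ2 else θ2))
      = W (θ1 - θ2) * (if be then pBond W θ1 θ2 else 1 - pBond W θ1 θ2) := by
  have h12 : θ1.cos * θ2.cos ≠ 0 := mul_ne_zero h1 h2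
  by_cases hr1 : r1
  · by_cases hr2 : r2
    · rw [if_pos hr1, if_pos hr2, W_flip_flip W hW, pBond_flip_flip W hW]
    · rw [if_pos hr1, if_neg hr2]
      cases be with
      | true => exact absurd ((hbe rfl).mp hr1) hr2
      | false =>
        rw [if_neg (by simp), if_neg (by simp)]
        exact flip_closed_left W hW θ1 θ2 h12
  · by_cases hr2 : r2
    · rw [if_neg hr1, if_pos hr2]
      cases be with
      | true => exact absurd ((hbe rfl).mpr hr2) hr1
      | false =>
        rw [if_neg (by simp), if_neg (by simp)]
        exact flip_closed_right W hW θ1 θ2 h12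
    · rw [if_neg hr1, if_neg hr2]

variable {V : Type} [Fintype V] [LinearOrder V]

lemma sym2_mk_inf_sup (e : Sym2 V) : s(e.inf, e.sup) = e := by
  induction e using Sym2.ind with
  | _ a b =>
    rcases le_total a b with h | h
    · rw [Sym2.inf_mk, Sym2.sup_mk, inf_eq_left.mpr h, sup_eq_right.mpr h]
    · rw [Sym2.inf_mk, Sym2.sup_mk, inf_eq_right.mpr h, sup_eq_left.mpr h, Sym2.eq_swap]

lemma density_flip (G : SimpleGraph V) [DecidableRel G.Adj] (B : Finset V) (W : Spin → ℝ)
    (hW : IsWeight W) (z : V) (ω : (V → Spin) × (Sym2 V → Bool))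
    (hω : ∀ v, (ω.1 v).cos ≠ 0) :
    spinDensity G W (flipMap G B z ω).1 *
        bondWeight1 G W (flipMap G B z ω).1 (flipMap G B z ω).2
      = spinDensity G W ω.1 * bondWeight1 G W ω.1 ω.2 := by
  by_cases h : ∃ v ∈ B, (openGraph G ω.2).Reachable z v
  · rw [flipMap, if_pos h]
  · have hfl : flipMap G B z ω =
        (fun y => if (openGraph G ω.2).Reachable z y then ((π : ℝ) : Spin) - ω.1 y else ω.1 y,
          ω.2) := by
      rw [flipMap, if_neg h]
    have h1 : (flipMap G B z ω).1 =
        fun y => if (openGraph G ω.2).Reachable z y then ((π : ℝ) : Spin) - ω.1 y else ω.1 y := by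
      rw [hfl]
    have h2 : (flipMap G B z ω).2 = ω.2 := by rw [hfl]
    rw [h1, h2]
    unfold spinDensity bondWeight1
    rw [← Finset.prod_mul_distrib, ← Finset.prod_mul_distrib]
    refine Finset.prod_congr rfl fun e he => ?_
    have hbe : ω.2 e = true →
        ((openGraph G ω.2).Reachable z e.inf ↔ (openGraph G ω.2).Reachable z e.sup) := by
      intro hb
      have hadj : (openGraph G ω.2).Adj e.inf e.sup := by
        show G.Adj e.inf e.sup ∧ ω.2 s(e.inf, e.sup) = true
        refine ⟨?_, ?_⟩
        · rw [← SimpleGraph.mem_edgeSet, sym2_mk_inf_sup]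
          exact SimpleGraph.mem_edgeFinset.mp he
        · rw [sym2_mk_inf_sup]; exact hb
      exact ⟨fun hr => hr.trans hadj.reachable, fun hr => hr.trans hadj.symm.reachable⟩
    beta_reduce
    rw [← ENNReal.ofReal_mul (hW.pos _).le, ← ENNReal.ofReal_mul (hW.pos _).le]
    exact congrArg ENNReal.ofReal
      (flip_edge W hW (ω.1 e.inf) (ω.1 e.sup) (hω e.inf) (hω e.sup) _ _ (ω.2 e) hbe)

lemma measurable_flipMap (G : SimpleGraph V) [DecidableRel G.Adj] (B : Finset V) (z : V) :
    Measurable (flipMap G B z) := by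
  have hS : ∀ S : Set (Sym2 V → Bool), MeasurableSet S := fun S => S.to_countable.measurableSet
  have hcond : ∀ y : V, MeasurableSet {ω : (V → Spin) × (Sym2 V → Bool) |
      (openGraph G ω.2).Reachable z y} :=
    fun y => measurable_snd (hS {b | (openGraph G b).Reachable z y})
  have hbd : MeasurableSet {ω : (V → Spin) × (Sym2 V → Bool) |
      ∃ v ∈ B, (openGraph G ω.2).Reachable z v} :=
    measurable_snd (hS {b | ∃ v ∈ B, (openGraph G b).Reachable z v})
  unfold flipMap
  refine Measurable.ite hbd measurable_id (Measurable.prodMk ?_ measurable_snd)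
  refine measurable_pi_iff.mpr fun y => ?_
  exact Measurable.ite (hcond y)
    (((measurable_pi_apply y).comp measurable_fst).const_sub _)
    ((measurable_pi_apply y).comp measurable_fst)

lemma spinBase_sigmaFinite (B : Finset V) : SigmaFinite (spinBase B) := by
  unfold spinBase
  haveI : ∀ v : V, SigmaFinite
      ((fun v => if v ∈ B then Measure.dirac (0 : Spin) else volume) v) := by
    intro v
    by_cases hv : v ∈ B <;> simp only [hv, if_true, if_false] <;> infer_instance
  infer_instance

lemma spinBase_flip (G : SimpleGraph V) [DecidableRel G.Adj] (B : Finset V) (z : V)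
    (b : Sym2 V → Bool) (h : ¬ ∃ v ∈ B, (openGraph G b).Reachable z v) :
    MeasurePreserving (fun θ : V → Spin =>
      fun y => if (openGraph G b).Reachable z y then ((π : ℝ) : Spin) - θ y else θ y)
      (spinBase B) (spinBase B) := by
  unfold spinBase
  haveI : ∀ v : V, SigmaFinite
      ((fun v => if v ∈ B then Measure.dirac (0 : Spin) else volume) v) := by
    intro v
    by_cases hv : v ∈ B <;> simp only [hv, if_true, if_false] <;> infer_instance
  refine MeasureTheory.measurePreserving_pi
    (fun v => if v ∈ B then Measure.dirac (0 : Spin) else volume)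
    (fun v => if v ∈ B then Measure.dirac (0 : Spin) else volume)
    (f := fun y t => if (openGraph G b).Reachable z y then ((π : ℝ) : Spin) - t else t)
    (fun y => ?_)
  by_cases hr : (openGraph G b).Reachable z y
  · have hyB : y ∉ B := fun hyB => h ⟨y, hyB, hr⟩
    simp only [hr, if_true, hyB, if_false]
    exact Measure.measurePreserving_sub_left volume _
  · simp only [hr, if_false]
    exact MeasurePreserving.id _

lemma base_map (G : SimpleGraph V) [DecidableRel G.Adj] (B : Finset V) (z : V) :
    Measure.map (flipMap G B z) ((spinBase B).prod Measure.count)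
      = (spinBase B).prod Measure.count := by
  haveI := spinBase_sigmaFinite (V := V) B
  rw [show (Measure.count : Measure (Sym2 V → Bool)) = Measure.sum Measure.dirac from rfl,
    Measure.prod_sum_right, Measure.map_sum (measurable_flipMap G B z).aemeasurable]
  congr 1
  funext b
  rw [Measure.prod_dirac, Measure.map_map (measurable_flipMap G B z) measurable_prodMk_right]
  by_cases h : ∃ v ∈ B, (openGraph G b).Reachable z v
  · have hcomp : (flipMap G B z) ∘ (fun θ : V → Spin => (θ, b)) = fun θ => (θ, b) := by
      funext θ
      show flipMap G B z (θ, b) = (θ, b)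
      rw [flipMap, if_pos h]
    rw [hcomp]
  · have hcomp : (flipMap G B z) ∘ (fun θ : V → Spin => (θ, b))
        = (fun θ : V → Spin => (θ, b)) ∘ (fun θ : V → Spin =>
            fun y => if (openGraph G b).Reachable z y then ((π : ℝ) : Spin) - θ y else θ y) := by
      funext θ
      show flipMap G B z (θ, b) = _
      rw [flipMap, if_neg h]
      rfl
    rw [hcomp, ← Measure.map_map measurable_prodMk_right (spinBase_flip G B z b h).measurable,
      (spinBase_flip G B z b h).map_eq]

lemma ae_good (B : Finset V) :
    ∀ᵐ ω ∂((spinBase B).prod (Measure.count : Measure (Sym2 V → Bool))),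
      ∀ v, ((ω.1 v : Spin)).cos ≠ 0 := by
  haveI := spinBase_sigmaFinite (V := V) B
  rw [MeasureTheory.ae_iff]
  have hsub : {ω : (V → Spin) × (Sym2 V → Bool) | ¬ ∀ v, (ω.1 v).cos ≠ 0}
      ⊆ ⋃ v : V, {ω : (V → Spin) × (Sym2 V → Bool) | (ω.1 v).cos = 0} := by
    intro ω hω
    push_neg at hω
    obtain ⟨v, hv⟩ := hω
    exact Set.mem_iUnion.mpr ⟨v, hv⟩
  refine measure_mono_null hsub (measure_iUnion_null fun v => ?_)
  have hset : {ω : (V → Spin) × (Sym2 V → Bool) | (ω.1 v).cos = 0}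
      = (Function.eval v ⁻¹' {s : Spin | Real.Angle.cos s = 0}) ×ˢ
          (Set.univ : Set (Sym2 V → Bool)) := by
    ext ω
    simp [Set.mem_prod, Function.eval]
  rw [hset, Measure.prod_prod]
  have hnull : spinBase B (Function.eval v ⁻¹' {s : Spin | Real.Angle.cos s = 0}) = 0 := by
    unfold spinBase
    haveI : ∀ v : V, SigmaFinite
        ((fun v => if v ∈ B then Measure.dirac (0 : Spin) else volume) v) := by
      intro v
      by_cases hv : v ∈ B <;> simp only [hv, if_true, if_false] <;> infer_instance
    refine Measure.pi_eval_preimage_null _ ?_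
    by_cases hv : v ∈ B
    · simp only [hv, if_true]
      rw [Measure.dirac_apply' _ cosZero_measurable]
      rw [Set.indicator_of_notMem]
      simp [Real.Angle.cos_zero]
    · simp only [hv, if_false]
      exact cosZero_null
  rw [hnull, zero_mul]

lemma meas_density (G : SimpleGraph V) [DecidableRel G.Adj] (W : Spin → ℝ) (hW : IsWeight W) :
    Measurable (fun ω : (V → Spin) × (Sym2 V → Bool) =>
      spinDensity G W ω.1 * bondWeight1 G W ω.1 ω.2) := by
  have hWm : Measurable W := hW.cont.measurable
  have hval : ∀ i : V, Measurable fun ω : (V → Spin) × (Sym2 V → Bool) => ω.1 i :=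
    fun i => (measurable_pi_apply i).comp measurable_fst
  have hp : ∀ i j : V,
      Measurable (fun ω : (V → Spin) × (Sym2 V → Bool) => pBond W (ω.1 i) (ω.1 j)) := by
    intro i j
    unfold pBond
    refine Measurable.ite ?_ ?_ measurable_const
    · exact measurableSet_lt measurable_const
        ((Real.Angle.continuous_cos.measurable.comp (hval i)).mul
          (Real.Angle.continuous_cos.measurable.comp (hval j)))
    · exact measurable_const.sub
        ((hWm.comp (measurable_const.sub ((hval i).add (hval j)))).div
          (hWm.comp ((hval i).sub (hval j))))
  refine Measurable.mul ?_ ?_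
  · unfold spinDensity
    refine Finset.measurable_prod _ fun e _ => ?_
    exact ENNReal.measurable_ofReal.comp (hWm.comp ((hval e.inf).sub (hval e.sup)))
  · unfold bondWeight1
    refine Finset.measurable_prod _ fun e _ => ?_
    refine ENNReal.measurable_ofReal.comp ?_
    refine Measurable.ite ?_ (hp e.inf e.sup) (measurable_const.sub (hp e.inf e.sup))
    exact measurable_snd (({b : Sym2 V → Bool | b e = true}).to_countable.measurableSet)

end FlipAux

/-- In the one-cluster extended model `(u,e)` with boundary
condition `1` on a finite connected graph with nonempty boundary, the map
`σ̄_z` preserves the joint law of `(u,e)`. -/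
theorem statement_3 {V : Type} [Fintype V] [LinearOrder V]
    (G : SimpleGraph V) [DecidableRel G.Adj] (hG : G.Connected)
    (B : Finset V) (hB : B.Nonempty)
    (W : Spin → ℝ) (hW : IsWeight W) (z : V) :
    MeasurePreserving (flipMap G B z) (extP1 G W B) (extP1 G W B) := by
  haveI := spinBase_sigmaFinite (V := V) B
  have hmeas := measurable_flipMap G B z
  have hbase : MeasurePreserving (flipMap G B z)
      ((spinBase B).prod (Measure.count : Measure (Sym2 V → Bool)))
      ((spinBase B).prod (Measure.count : Measure (Sym2 V → Bool))) :=
    ⟨hmeas, base_map G B z⟩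
  have hf := meas_density G W hW
  have haux : Measure.map (flipMap G B z) (extAux1 G W B) = extAux1 G W B := by
    unfold extAux1
    ext s hs
    rw [Measure.map_apply hmeas hs, withDensity_apply _ (hmeas hs), withDensity_apply _ hs,
      ← hbase.setLIntegral_comp_preimage hs hf]
    refine lintegral_congr_ae (ae_restrict_of_ae ?_)
    filter_upwards [ae_good B] with ω hω
    exact (density_flip G B W hW z ω hω).symm
  refine ⟨hmeas, ?_⟩
  unfold extP1
  rw [Measure.map_smul, haux]

end
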